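/- Let X and Y be modular Riesz bases for a Hilbert A-module E and let U be a bounded adjointable operator on ℓ²(A). Then U is invertible if and only if the generalized Riesz multiplier M_{U,Y,X} = T_Y* U T_X is invertible; moreover, when U is invertible, M_{U,Y,X}⁻¹ = M_{U⁻¹, X̃, Ỹ} where X̃, Ỹ are the canonical dual Riesz bases. -/

import Mathlib

open scoped RightActions

/-- The Hilbert C⋆-module class of the older library: a right `A`-module structure
(`SMul Aᵐᵒᵖ E`) with an `A`-valued inner product, `A`-linear on the right in the second
argument. (Mathlib's `CStarModule` is now a left-module class.) -/
class CStarModuleOld (A : outParam <| Type*) (E : Type*) [NonUnitalSemiring A] [StarRing A] [Module ℂ A]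
    [AddCommGroup E] [Module ℂ E] [PartialOrder A] [SMul Aᵐᵒᵖ E] [Norm A] [Norm E]
    extends Inner A E where
  inner_add_right {x} {y} {z} : inner x (y + z) = inner x y + inner x z
  inner_self_nonneg {x} : 0 ≤ inner x x
  inner_self {x} : inner x x = 0 ↔ x = 0
  inner_op_smul_right {a : A} {x y : E} : inner x (y <• a) = inner x y * a
  inner_smul_right_complex {z : ℂ} {x} {y} : inner x (z • y) = z • inner x y
  star_inner x y : star (inner x y) = inner y x
  norm_eq_sqrt_norm_inner_self x : ‖x‖ = √‖inner x x‖

/-- Two maps between Hilbert C*-modules form an adjoint pair: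
`⟪T x, y⟫ = ⟪x, S y⟫` for all `x, y`. -/
def IsAdjointPairCM (A : Type*) [CStarAlgebra A] [PartialOrder A] [StarOrderedRing A]
    {E F : Type*} [NormedAddCommGroup E] [NormedSpace ℂ E] [SMul Aᵐᵒᵖ E] [CStarModuleOld A E]
    [NormedAddCommGroup F] [NormedSpace ℂ F] [SMul Aᵐᵒᵖ F] [CStarModuleOld A F]
    (T : E → F) (S : F → E) : Prop :=
  ∀ (x : E) (y : F), (inner A (T x) y : A) = inner A x (S y)

section Defs
variable {A : Type*} [CStarAlgebra A] [PartialOrder A] [StarOrderedRing A]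
variable {E L : Type*} [NormedAddCommGroup E] [NormedSpace ℂ E] [SMul Aᵐᵒᵖ E] [CStarModuleOld A E]
  [NormedAddCommGroup L] [NormedSpace ℂ L] [SMul Aᵐᵒᵖ L] [CStarModuleOld A L]

/-- `x` is a standard Bessel sequence with Bessel bound `D`:
`∑ₙ ⟪v, xₙ⟫⟪xₙ, v⟫` is norm-convergent and bounded by `D ⟪v, v⟫`. -/
def IsBesselSeq (x : ℕ → E) (D : ℝ) : Prop :=
  ∀ v : E, Summable (fun n => (inner A v (x n) : A) * inner A (x n) v) ∧
    (∑' n, (inner A v (x n) : A) * inner A (x n) v) ≤ D • (inner A v v : A)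

/-- `x` is a standard frame with frame bounds `C`, `D`. -/
def IsFrameSeq (x : ℕ → E) (C D : ℝ) : Prop :=
  IsBesselSeq x D ∧
    ∀ v : E, C • (inner A v v : A) ≤ ∑' n, (inner A v (x n) : A) * inner A (x n) v

/-- `e` is the standard orthonormal basis of (a copy of) `ℓ²(A)`:
orthonormality together with the reconstruction `v = ∑ₙ eₙ • ⟪eₙ, v⟫`. -/
def IsStdBasis (e : ℕ → L) : Prop :=
  (∀ m n : ℕ, (inner A (e m) (e n) : A) = if m = n then 1 else 0) ∧
    ∀ v : L, HasSum (fun n => e n <• (inner A (e n) v : A)) v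

/-- `T` is the analysis operator of the sequence `x`, relative to the standard
basis `e` of `ℓ²(A)`: the `n`-th coefficient of `T v` is `⟪xₙ, v⟫`. -/
def IsAnalysisOp (e : ℕ → L) (x : ℕ → E) (T : E → L) : Prop :=
  ∀ (v : E) (n : ℕ), (inner A (e n) (T v) : A) = inner A (x n) v

/-- `S` is the synthesis operator of the sequence `x`: `S a = ∑ₙ xₙ • aₙ`. -/
def IsSynthesisOp (e : ℕ → L) (x : ℕ → E) (S : L → E) : Prop :=
  ∀ a : L, HasSum (fun n => x n <• (inner A (e n) a : A)) (S a)

/-- `x` is a modular Riesz basis: the image of the standard basis `e` of `ℓ²(A)`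
under an adjointable invertible operator. -/
def IsModularRieszBasis (e : ℕ → L) (x : ℕ → E) : Prop :=
  ∃ (V : L →L[ℂ] E) (Vinv : E →L[ℂ] L) (Vstar : E →L[ℂ] L),
    Function.LeftInverse Vinv V ∧ Function.RightInverse Vinv V ∧
      IsAdjointPairCM A V Vstar ∧ ∀ n, V (e n) = x n

end Defs

variable {A : Type*} [CStarAlgebra A] [PartialOrder A] [StarOrderedRing A]
variable {E F L : Type*}
  [NormedAddCommGroup E] [NormedSpace ℂ E] [SMul Aᵐᵒᵖ E] [CStarModuleOld A E]
  [NormedAddCommGroup F] [NormedSpace ℂ F] [SMul Aᵐᵒᵖ F] [CStarModuleOld A F]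
  [NormedAddCommGroup L] [NormedSpace ℂ L] [SMul Aᵐᵒᵖ L] [CStarModuleOld A L]

/-- For modular Riesz bases `X`, `Y`, the symbol `U` is invertible iff the Riesz
multiplier `M_{U,Y,X}` is invertible; in that case `M_{U,Y,X}⁻¹ = M_{U⁻¹,X̃,Ỹ}`,
where `X̃`, `Ỹ` are the canonical duals. -/
theorem riesz_multiplier_invertible_iff
    (e : ℕ → L) (he : IsStdBasis e)
    (x y : ℕ → E)
    (hX : IsModularRieszBasis e x) (hY : IsModularRieszBasis e y)
    (TX TY : E →L[ℂ] L) (SX SY : L →L[ℂ] E)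
    (hTX : IsAnalysisOp e x TX) (hSX : IsAdjointPairCM A TX SX)
    (hTY : IsAnalysisOp e y TY) (hSY : IsAdjointPairCM A TY SY)
    (SXinv SYinv : E →L[ℂ] E)
    (hSX1 : Function.LeftInverse SXinv (SX.comp TX))
    (hSX2 : Function.RightInverse SXinv (SX.comp TX))
    (hSY1 : Function.LeftInverse SYinv (SY.comp TY))
    (hSY2 : Function.RightInverse SYinv (SY.comp TY))
    (xt yt : ℕ → E) (hxt : ∀ n, xt n = SXinv (x n)) (hyt : ∀ n, yt n = SYinv (y n))
    (Txt Tyt : E →L[ℂ] L) (Sxt : L →L[ℂ] E)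
    (hTxt : IsAnalysisOp e xt Txt) (hSxt : IsAdjointPairCM A Txt Sxt)
    (hTyt : IsAnalysisOp e yt Tyt)
    (U : L →L[ℂ] L) :
    ((∃ Uinv : L →L[ℂ] L, Function.LeftInverse Uinv U ∧ Function.RightInverse Uinv U) ↔
      (∃ Minv : E →L[ℂ] E,
        Function.LeftInverse Minv (SY.comp (U.comp TX)) ∧
        Function.RightInverse Minv (SY.comp (U.comp TX)))) ∧
    ∀ Uinv : L →L[ℂ] L, Function.LeftInverse Uinv U → Function.RightInverse Uinv U →
      Function.LeftInverse (Sxt.comp (Uinv.comp Tyt)) (SY.comp (U.comp TX)) ∧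
      Function.RightInverse (Sxt.comp (Uinv.comp Tyt)) (SY.comp (U.comp TX)) := by
  obtain ⟨VX, VXinv, VXstar, hVX1, hVX2, hVXadj, hVXe⟩ := hX
  obtain ⟨VY, VYinv, VYstar, hVY1, hVY2, hVYadj, hVYe⟩ := hY
  -- uniqueness from the standard basis
  have eqL : ∀ a b : L, (∀ n, (inner A (e n) a : A) = inner A (e n) b) → a = b := by
    intro a b h
    have ha := he.2 a
    have hb := he.2 b
    have hfun : (fun n => e n <• (inner A (e n) a : A)) =
        fun n => e n <• (inner A (e n) b : A) := by
      funext n; rw [h n]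
    rw [hfun] at ha
    exact ha.unique hb
  have eqE : ∀ b c : E, (∀ v : E, (inner A v b : A) = inner A v c) → b = c := by
    intro b c h
    have h2 : (inner A (b - c) (b - c) : A) = 0 := by
      have hs : (inner A (b - c) (b - c) : A) + inner A (b - c) c = inner A (b - c) b := by
        rw [← CStarModuleOld.inner_add_right, sub_add_cancel]
      rw [h (b - c)] at hs
      exact add_eq_right.mp hs
    exact sub_eq_zero.mp (CStarModuleOld.inner_self.mp h2)
  -- analysis operators are the adjoints of the Riesz-basis operators
  have hTXs : ∀ v : E, TX v = VXstar v := by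
    intro v
    refine eqL _ _ fun n => ?_
    rw [hTX v n, ← hVXe n, hVXadj]
  have hTYs : ∀ v : E, TY v = VYstar v := by
    intro v
    refine eqL _ _ fun n => ?_
    rw [hTY v n, ← hVYe n, hVYadj]
  have hSXV : ∀ a : L, SX a = VX a := by
    intro a
    refine eqE _ _ fun v => ?_
    rw [← hSX v a, hTXs v, ← CStarModuleOld.star_inner (VX a), hVXadj,
      CStarModuleOld.star_inner]
  have hSYV : ∀ a : L, SY a = VY a := by
    intro a
    refine eqE _ _ fun v => ?_
    rw [← hSY v a, hTYs v, ← CStarModuleOld.star_inner (VY a), hVYadj,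
      CStarModuleOld.star_inner]
  -- TX ∘ (SXinv ∘ SX) = id  and similarly for Y
  have hTXW : ∀ a : L, TX (SXinv (SX a)) = a := by
    intro a
    have h1 : SX (TX (SXinv (SX a))) = SX a := hSX2 (SX a)
    rw [hSXV, hSXV a] at h1
    have := congrArg VXinv h1
    rw [hVX1, hVX1] at this
    rw [hSXV a]; exact this
  have hTYW : ∀ a : L, TY (SYinv (SY a)) = a := by
    intro a
    have h1 : SY (TY (SYinv (SY a))) = SY a := hSY2 (SY a)
    rw [hSYV, hSYV a] at h1
    have := congrArg VYinv h1
    rw [hVY1, hVY1] at this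
    rw [hSYV a]; exact this
  -- unfolded versions of the inverse hypotheses
  have hSX1' : ∀ v : E, SXinv (SX (TX v)) = v := fun v => hSX1 v
  have hSX2' : ∀ v : E, SX (TX (SXinv v)) = v := fun v => hSX2 v
  have hSY1' : ∀ v : E, SYinv (SY (TY v)) = v := fun v => hSY1 v
  have hSY2' : ∀ v : E, SY (TY (SYinv v)) = v := fun v => hSY2 v
  -- SXinv, SYinv are selfadjoint
  have hSXsa : ∀ v w : E, (inner A (SXinv v) w : A) = inner A v (SXinv w) := by
    intro v w
    calc (inner A (SXinv v) w : A)
        = inner A (SXinv v) (SX (TX (SXinv w))) := by rw [hSX2' w]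
      _ = inner A (TX (SXinv v)) (TX (SXinv w)) := (hSX (SXinv v) (TX (SXinv w))).symm
      _ = star (inner A (TX (SXinv w)) (TX (SXinv v)) : A) := by
            rw [CStarModuleOld.star_inner]
      _ = star (inner A (SXinv w) (SX (TX (SXinv v))) : A) := by rw [hSX]
      _ = star (inner A (SXinv w) v : A) := by rw [hSX2' v]
      _ = inner A v (SXinv w) := CStarModuleOld.star_inner _ _
  have hSYsa : ∀ v w : E, (inner A (SYinv v) w : A) = inner A v (SYinv w) := by
    intro v w
    calc (inner A (SYinv v) w : A)
        = inner A (SYinv v) (SY (TY (SYinv w))) := by rw [hSY2' w]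
      _ = inner A (TY (SYinv v)) (TY (SYinv w)) := (hSY (SYinv v) (TY (SYinv w))).symm
      _ = star (inner A (TY (SYinv w)) (TY (SYinv v)) : A) := by
            rw [CStarModuleOld.star_inner]
      _ = star (inner A (SYinv w) (SY (TY (SYinv v))) : A) := by rw [hSY]
      _ = star (inner A (SYinv w) v : A) := by rw [hSY2' v]
      _ = inner A v (SYinv w) := CStarModuleOld.star_inner _ _
  -- the dual analysis / synthesis operators
  have hTxt' : ∀ v : E, Txt v = TX (SXinv v) := by
    intro v
    refine eqL _ _ fun n => ?_
    rw [hTxt v n, hxt n, hSXsa, ← hTX (SXinv v) n]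
  have hTyt' : ∀ v : E, Tyt v = TY (SYinv v) := by
    intro v
    refine eqL _ _ fun n => ?_
    rw [hTyt v n, hyt n, hSYsa, ← hTY (SYinv v) n]
  have hSxt' : ∀ a : L, Sxt a = SXinv (SX a) := by
    intro a
    refine eqE _ _ fun v => ?_
    rw [← hSxt v a, hTxt' v, hSX (SXinv v) a, hSXsa]
  -- Part 2: the explicit inverse when U is invertible
  have part2 : ∀ Uinv : L →L[ℂ] L, Function.LeftInverse Uinv U →
      Function.RightInverse Uinv U →
      Function.LeftInverse (Sxt.comp (Uinv.comp Tyt)) (SY.comp (U.comp TX)) ∧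
      Function.RightInverse (Sxt.comp (Uinv.comp Tyt)) (SY.comp (U.comp TX)) := by
    intro Uinv hU1 hU2
    constructor
    · intro v
      show Sxt (Uinv (Tyt (SY (U (TX v))))) = v
      rw [hTyt' (SY (U (TX v))), hTYW (U (TX v)), hU1 (TX v), hSxt' (TX v), hSX1' v]
    · intro v
      show SY (U (TX (Sxt (Uinv (Tyt v))))) = v
      rw [hSxt' (Uinv (Tyt v)), hTXW (Uinv (Tyt v)), hU2 (Tyt v), hTyt' v, hSY2' v]
  refine ⟨⟨fun ⟨Uinv, hU1, hU2⟩ => ⟨Sxt.comp (Uinv.comp Tyt), part2 Uinv hU1 hU2⟩, ?_⟩,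
    part2⟩
  rintro ⟨Minv, hM1, hM2⟩
  refine ⟨TX.comp (Minv.comp SY), ?_, ?_⟩
  · intro z
    show TX (Minv (SY (U z))) = z
    have h1 : Minv (SY (U (TX (SXinv (SX z))))) = SXinv (SX z) := hM1 (SXinv (SX z))
    rw [hTXW z] at h1
    rw [h1, hTXW z]
  · intro w
    show U (TX (Minv (SY w))) = w
    have h1 : SY (U (TX (Minv (SY w)))) = SY w := hM2 (SY w)
    rw [hSYV, hSYV w] at h1
    have := congrArg VYinv h1
    rw [hVY1, hVY1] at this
    rw [hSYV w]; exact this
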